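/- On a (2n+1)-dimensional para-Sasaki-like Riemannian Π-manifold that is para-Einstein-like with constants (a,b,c), one has a + b + c = −2n and the scalar curvature τ of g equals 2n(a − 1). -/

import Mathlib

/-- Pointwise algebraic model of a Riemannian Π-manifold structure:
a real vector space with a positive definite symmetric bilinear form `g`
and an almost paracontact almost paracomplex structure `(φ, ξ, η)`. -/
structure RPiM (V : Type*) [AddCommGroup V] [Module ℝ V] where
  g : V →ₗ[ℝ] V →ₗ[ℝ] ℝ
  phi : V →ₗ[ℝ] V
  xi : V
  eta : V →ₗ[ℝ] ℝ
  g_symm : ∀ x y, g x y = g y x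
  g_posdef : ∀ x, x ≠ 0 → 0 < g x x
  phi_xi : phi xi = 0
  phi_sq : ∀ x, phi (phi x) = x - eta x • xi
  eta_phi : ∀ x, eta (phi x) = 0
  eta_xi : eta xi = 1
  tr_phi : LinearMap.trace ℝ V phi = 0
  compat : ∀ x y, g (phi x) (phi y) = g x y - eta x * eta y

/-- on a `(2n+1)`-dimensional para-Sasaki-like Riemannian Π-manifold that is
para-Einstein-like with constants `(a,b,c)` (i.e. `ρ = a g + b g̃ + c η⊗η`, where the
para-Sasaki-like condition yields `ρ(x,ξ) = −2n η(x)`), one has `a + b + c = −2n` and the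
scalar curvature `τ` of `g` (the `g`-trace of `ρ`) equals `2n(a−1)`. -/
theorem stmt5 {V : Type*} [AddCommGroup V] [Module ℝ V] [FiniteDimensional ℝ V]
    (n : ℕ) (S : RPiM V)
    (rho : V →ₗ[ℝ] V →ₗ[ℝ] ℝ) (a b c τ : ℝ)
    (e : Module.Basis (Fin (2 * n + 1)) ℝ V)
    (he : ∀ i j, S.g (e i) (e j) = if i = j then 1 else 0)
    (hEl : ∀ x y, rho x y =
      a * S.g x y + b * (S.g x (S.phi y) + S.eta x * S.eta y) + c * (S.eta x * S.eta y))
    (hrho_xi : ∀ x, rho x S.xi = -(2 * (n : ℝ)) * S.eta x)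
    (htau : τ = ∑ i, rho (e i) (e i)) :
    a + b + c = -(2 * (n : ℝ)) ∧ τ = 2 * (n : ℝ) * (a - 1) := by
  -- η = g(·, ξ)
  have heta : ∀ x, S.eta x = S.g x S.xi := by
    intro x
    have h := S.compat x S.xi
    simp [S.phi_xi, S.eta_xi] at h
    linarith
  have hxx : S.g S.xi S.xi = 1 := by
    have := heta S.xi; rw [S.eta_xi] at this; linarith
  -- g x (e j) = repr
  have hg : ∀ x (j : Fin (2*n+1)), S.g x (e j) = e.repr x j := by
    intro x j
    conv_lhs => rw [← e.sum_repr x]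
    simp only [map_sum, LinearMap.sum_apply, map_smul, LinearMap.smul_apply, smul_eq_mul, he, mul_ite, mul_one,
      mul_zero, Finset.sum_ite_eq, Finset.sum_ite_eq', Finset.mem_univ, if_true]
  -- part 1
  have h1 : a + b + c = -(2 * (n : ℝ)) := by
    have h := hrho_xi S.xi
    rw [hEl] at h
    simp [S.phi_xi, S.eta_xi, hxx] at h
    linarith
  refine ⟨h1, ?_⟩
  -- part 2
  have hdiag : ∀ i : Fin (2*n+1), S.eta (e i) = e.repr S.xi i := by
    intro i
    rw [heta, S.g_symm, hg]
  have hsum_eta : ∑ i, S.eta (e i) * S.eta (e i) = 1 := by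
    have : S.g S.xi S.xi = ∑ i, e.repr S.xi i * e.repr S.xi i := by
      nth_rewrite 1 [← e.sum_repr S.xi]
      rw [map_sum, LinearMap.sum_apply]
      simp only [map_smul, LinearMap.smul_apply, smul_eq_mul]
      exact Finset.sum_congr rfl fun i _ => by rw [S.g_symm, hg]
    rw [hxx] at this
    simp only [hdiag]
    linarith
  have hsum_phi : ∑ i, S.g (e i) (S.phi (e i)) = 0 := by
    have htr : LinearMap.trace ℝ V S.phi = ∑ i, e.repr (S.phi (e i)) i := by
      rw [LinearMap.trace_eq_matrix_trace ℝ e, Matrix.trace]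
      simp [LinearMap.toMatrix_apply, Matrix.diag]
    rw [S.tr_phi] at htr
    calc ∑ i, S.g (e i) (S.phi (e i)) = ∑ i, e.repr (S.phi (e i)) i := by
          refine Finset.sum_congr rfl fun i _ => ?_
          rw [S.g_symm, hg]
      _ = 0 := htr.symm
  have hsum_g : ∑ i : Fin (2*n+1), S.g (e i) (e i) = (2*n+1 : ℝ) := by
    simp [he]
  rw [htau]
  have : ∀ i : Fin (2*n+1), rho (e i) (e i) =
      a * S.g (e i) (e i) + b * (S.g (e i) (S.phi (e i)) + S.eta (e i) * S.eta (e i))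
      + c * (S.eta (e i) * S.eta (e i)) := fun i => hEl (e i) (e i)
  simp only [this]
  rw [Finset.sum_add_distrib, Finset.sum_add_distrib, ← Finset.mul_sum, ← Finset.mul_sum,
    ← Finset.mul_sum, hsum_g, hsum_eta]
  rw [Finset.sum_add_distrib, hsum_phi, hsum_eta] at *
  ring_nf
  nlinarith [h1]
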